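/- Let U : S(ℝⁿ) → S(ℝⁿ) be a map satisfying U(f·g) = U(f)·U(g) for all f, g ∈ S(ℝⁿ). If f ∈ S(ℝⁿ) is smooth with compact support, then Uf has compact support. -/
import Mathlib

open MeasureTheory SchwartzMap

/-- A smooth compactly supported function is a Schwartz map. -/
noncomputable def toSchwartz {E : Type*} [NormedAddCommGroup E] [NormedSpace ℝ E]
    (g : E → ℂ) (hg : ContDiff ℝ ((⊤ : ℕ∞) : WithTop ℕ∞) g) (hsupp : HasCompactSupport g) :
    SchwartzMap E ℂ where
  toFun := g
  smooth' := hg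
  decay' := by
    intro k m
    have h1 : HasCompactSupport (fun x => ‖x‖ ^ k * ‖iteratedFDeriv ℝ m g x‖) := by
      apply HasCompactSupport.mul_left
      exact (hsupp.iteratedFDeriv m).norm
    have h2 : Continuous (fun x => ‖x‖ ^ k * ‖iteratedFDeriv ℝ m g x‖) := by
      exact ((continuous_norm.pow k).mul
        (hg.continuous_iteratedFDeriv (mod_cast le_top)).norm)
    obtain ⟨C, hC⟩ := h1.exists_bound_of_continuous h2
    exact ⟨C, fun x => (le_abs_self _).trans ((Real.norm_eq_abs _) ▸ hC x)⟩

theorem stmt_3 (n : ℕ)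
    (U : SchwartzMap (EuclideanSpace ℝ (Fin n)) ℂ → SchwartzMap (EuclideanSpace ℝ (Fin n)) ℂ)
    (h2 : ∀ f g h : SchwartzMap (EuclideanSpace ℝ (Fin n)) ℂ,
      (∀ x, h x = f x * g x) → ∀ x, U h x = U f x * U g x)
    (f : SchwartzMap (EuclideanSpace ℝ (Fin n)) ℂ)
    (hf : HasCompactSupport ⇑f) :
    HasCompactSupport ⇑(U f) := by
  -- choose a radius containing the support of f
  obtain ⟨R, hR⟩ := hf.isCompact.isBounded.subset_closedBall 0
  -- a bump function equal to 1 on the support of f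
  have hlt : (0 : ℝ) < max R 0 + 1 := by positivity
  let b : ContDiffBump (0 : EuclideanSpace ℝ (Fin n)) :=
    ⟨max R 0 + 1, max R 0 + 2, hlt, by linarith⟩
  let χfun : EuclideanSpace ℝ (Fin n) → ℂ := fun x => (b x : ℂ)
  have hχsmooth : ContDiff ℝ ((⊤ : ℕ∞) : WithTop ℕ∞) χfun :=
    Complex.ofRealCLM.contDiff.comp (b.contDiff (n := (⊤ : ℕ∞)))
  have hχsupp : HasCompactSupport χfun := by
    apply b.hasCompactSupport.comp_left (g := fun t : ℝ => (t : ℂ))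
    simp
  let χ : SchwartzMap (EuclideanSpace ℝ (Fin n)) ℂ := toSchwartz χfun hχsmooth hχsupp
  have hfχ : ∀ x, f x = f x * χ x := by
    intro x
    by_cases hx : x ∈ tsupport ⇑f
    · have hx' : x ∈ Metric.closedBall (0 : EuclideanSpace ℝ (Fin n)) b.rIn := by
        have := hR hx
        simp only [Metric.mem_closedBall] at this ⊢
        have : dist x 0 ≤ max R 0 := this.trans (le_max_left _ _)
        linarith
      have hb : b x = 1 := b.one_of_mem_closedBall hx'
      have : χ x = 1 := by
        show ((b x : ℝ) : ℂ) = 1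
        rw [hb]; norm_num
      rw [this, mul_one]
    · rw [image_eq_zero_of_notMem_tsupport hx, zero_mul]
  have key : ∀ x, U f x = U f x * U χ x := h2 f χ f hfχ
  -- decay of U χ
  obtain ⟨C, hC⟩ := (U χ).decay 1 0
  apply HasCompactSupport.intro (K := Metric.closedBall (0 : EuclideanSpace ℝ (Fin n)) C)
    (isCompact_closedBall 0 C)
  intro x hx
  by_contra hne
  have h1 : U χ x = 1 := by
    have := key x
    field_simp at this
    tauto
  have := hC.2 x
  rw [norm_iteratedFDeriv_zero, h1] at this
  simp only [norm_one, pow_one, mul_one] at this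
  exact hx (by simpa [Metric.mem_closedBall, dist_eq_norm] using this)
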